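/- Let a ∈ ℝ and let I be an interval with least element a, nonempty interior, and I ⊂ [a,∞). If 0 < α ≤ 1 and q : I → ℝ is essentially bounded on I, then I^α_{a+}[q] is α-Hölder continuous on all of I and vanishes at a: there exists C ≥ 0 such that |I^α_{a+}[q](t₂) − I^α_{a+}[q](t₁)| ≤ C·|t₂ − t₁|^α for all t₁, t₂ ∈ I, and I^α_{a+}[q](a) = 0. -/

import Mathlib

open MeasureTheory Set

/-- Left Riemann–Liouville fractional integral of order `α` with base point `a`
(for `α = 0` it is the identity). -/
noncomputable def rlInt (a α : ℝ) (q : ℝ → ℝ) (t : ℝ) : ℝ :=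
  if α = 0 then q t else (1 / Real.Gamma α) * ∫ τ in a..t, (t - τ) ^ (α - 1) * q τ

private lemma rl_pow_integral {α : ℝ} (hα : 0 < α) (t c d : ℝ) :
    (∫ τ in c..d, (t - τ) ^ (α - 1)) = ((t - c) ^ α - (t - d) ^ α) / α := by
  rw [intervalIntegral.integral_comp_sub_left (fun x => x ^ (α - 1)) t,
    integral_rpow (Or.inl (by linarith : (-1:ℝ) < α - 1))]
  have h : α - 1 + 1 = α := by ring
  rw [h]

private lemma rl_ker_int {α : ℝ} (hα : 0 < α) (t c d : ℝ) :
    IntervalIntegrable (fun τ => (t - τ) ^ (α - 1)) volume c d := by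
  have h := (intervalIntegral.intervalIntegrable_rpow' (a := t - c) (b := t - d)
    (by linarith : (-1:ℝ) < α - 1)).comp_sub_left t
  simpa using h

private lemma rl_mul_int {α : ℝ} (hα : 0 < α) {q : ℝ → ℝ} {I : Set ℝ} {M : ℝ}
    (hqm : AEStronglyMeasurable q (volume.restrict I))
    (hM : ∀ᵐ τ ∂(volume.restrict I), |q τ| ≤ M)
    {c d : ℝ} (t : ℝ) (hcd : c ≤ d) (hsub : Ioc c d ⊆ I) :
    IntervalIntegrable (fun τ => (t - τ) ^ (α - 1) * q τ) volume c d := by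
  rw [intervalIntegrable_iff_integrableOn_Ioc_of_le hcd]
  have hker : IntegrableOn (fun τ => (t - τ) ^ (α - 1)) (Ioc c d) volume := by
    have h := (rl_ker_int hα t c d).def'
    rwa [uIoc_of_le hcd] at h
  have hle : volume.restrict (Ioc c d) ≤ volume.restrict I :=
    Measure.restrict_mono hsub le_rfl
  have h := Integrable.mul_bdd (c := M) hker (hqm.mono_measure hle)
    ((hM.filter_mono (ae_mono hle)).mono fun x hx => by
      simpa [Real.norm_eq_abs] using hx)
  exact h

private lemma rl_hoelder {α : ℝ} (hα0 : 0 < α) (hα1 : α ≤ 1) {q : ℝ → ℝ} {I : Set ℝ} {M : ℝ}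
    (hqm : AEStronglyMeasurable q (volume.restrict I))
    (hM : ∀ᵐ τ ∂(volume.restrict I), |q τ| ≤ M) (hMnn : 0 ≤ M)
    {a t₁ t₂ : ℝ} (ha1 : a ≤ t₁) (h12 : t₁ ≤ t₂) (hsub : Ioc a t₂ ⊆ I) :
    |(∫ τ in a..t₂, (t₂ - τ) ^ (α - 1) * q τ) - ∫ τ in a..t₁, (t₁ - τ) ^ (α - 1) * q τ|
      ≤ (2 * M / α) * (t₂ - t₁) ^ α := by
  have hsub1 : Ioc a t₁ ⊆ I := subset_trans (Ioc_subset_Ioc_right h12) hsub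
  have hsub2 : Ioc t₁ t₂ ⊆ I := subset_trans (Ioc_subset_Ioc_left ha1) hsub
  have hi1 : IntervalIntegrable (fun τ => (t₂ - τ) ^ (α-1) * q τ) volume a t₁ :=
    rl_mul_int hα0 hqm hM t₂ ha1 hsub1
  have hi2 : IntervalIntegrable (fun τ => (t₂ - τ) ^ (α-1) * q τ) volume t₁ t₂ :=
    rl_mul_int hα0 hqm hM t₂ h12 hsub2
  have hi3 : IntervalIntegrable (fun τ => (t₁ - τ) ^ (α-1) * q τ) volume a t₁ :=
    rl_mul_int hα0 hqm hM t₁ ha1 hsub1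
  have hmono : (t₁ - a) ^ α ≤ (t₂ - a) ^ α :=
    Real.rpow_le_rpow (by linarith) (by linarith) hα0.le
  have hsplit : (∫ τ in a..t₂, (t₂ - τ) ^ (α-1) * q τ)
      = (∫ τ in a..t₁, (t₂ - τ) ^ (α-1) * q τ) + ∫ τ in t₁..t₂, (t₂ - τ) ^ (α-1) * q τ :=
    (intervalIntegral.integral_add_adjacent_intervals hi1 hi2).symm
  have hA : (∫ τ in a..t₁, (t₂ - τ)^(α-1) * q τ) - (∫ τ in a..t₁, (t₁ - τ)^(α-1) * q τ)
      = ∫ τ in a..t₁, ((t₂ - τ)^(α-1) - (t₁ - τ)^(α-1)) * q τ := by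
    rw [← intervalIntegral.integral_sub hi1 hi3]
    simp only [sub_mul]
  -- a.e. statements
  have hne : ∀ᵐ (τ : ℝ) ∂volume, τ ≠ t₁ := by
    rw [ae_iff]
    simpa using (measure_singleton t₁ : (volume : Measure ℝ) {t₁} = 0)
  have hMloc1 : ∀ᵐ τ ∂(volume.restrict (Ioc a t₁)), |q τ| ≤ M :=
    hM.filter_mono (ae_mono (Measure.restrict_mono hsub1 le_rfl))
  have hMloc2 : ∀ᵐ τ ∂(volume.restrict (Ioc t₁ t₂)), |q τ| ≤ M :=
    hM.filter_mono (ae_mono (Measure.restrict_mono hsub2 le_rfl))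
  -- bound for A
  have hgint : IntervalIntegrable
      (fun τ => M * ((t₁ - τ) ^ (α-1) - (t₂ - τ) ^ (α-1))) volume a t₁ :=
    ((rl_ker_int hα0 t₁ a t₁).sub (rl_ker_int hα0 t₂ a t₁)).const_mul M
  have hABnd : ∀ᵐ τ ∂(volume.restrict (Set.uIoc a t₁)),
      ‖((t₂ - τ)^(α-1) - (t₁ - τ)^(α-1)) * q τ‖
        ≤ M * ((t₁ - τ) ^ (α-1) - (t₂ - τ) ^ (α-1)) := by
    rw [uIoc_of_le ha1]
    filter_upwards [hMloc1, ae_restrict_mem measurableSet_Ioc, ae_restrict_of_ae hne]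
      with τ hq hmem hτne
    have h1 : 0 < t₁ - τ := sub_pos.mpr (lt_of_le_of_ne hmem.2 hτne)
    have hk : (t₂ - τ)^(α-1) ≤ (t₁ - τ)^(α-1) :=
      Real.rpow_le_rpow_of_nonpos h1 (by linarith) (by linarith)
    have hknn : 0 ≤ (t₁ - τ)^(α-1) - (t₂ - τ)^(α-1) := by linarith
    rw [norm_mul, Real.norm_eq_abs, Real.norm_eq_abs, abs_sub_comm, abs_of_nonneg hknn,
      mul_comm M _]
    exact mul_le_mul_of_nonneg_left hq hknn
  have hgval : (∫ τ in a..t₁, M * ((t₁ - τ) ^ (α-1) - (t₂ - τ) ^ (α-1)))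
      = (M / α) * ((t₁ - a) ^ α - (t₂ - a) ^ α + (t₂ - t₁) ^ α) := by
    rw [intervalIntegral.integral_const_mul,
      intervalIntegral.integral_sub (rl_ker_int hα0 t₁ a t₁) (rl_ker_int hα0 t₂ a t₁),
      rl_pow_integral hα0, rl_pow_integral hα0, sub_self, Real.zero_rpow hα0.ne']
    ring
  have hg0 : 0 ≤ ∫ τ in a..t₁, M * ((t₁ - τ) ^ (α-1) - (t₂ - τ) ^ (α-1)) := by
    apply intervalIntegral.integral_nonneg_of_ae_restrict ha1
    filter_upwards [ae_restrict_mem measurableSet_Icc, ae_restrict_of_ae hne]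
      with τ hmem hτne
    have h1 : 0 < t₁ - τ := sub_pos.mpr (lt_of_le_of_ne hmem.2 hτne)
    have hk : (t₂ - τ)^(α-1) ≤ (t₁ - τ)^(α-1) :=
      Real.rpow_le_rpow_of_nonpos h1 (by linarith) (by linarith)
    exact mul_nonneg hMnn (by linarith)
  have hAle : |∫ τ in a..t₁, ((t₂ - τ)^(α-1) - (t₁ - τ)^(α-1)) * q τ|
      ≤ (M / α) * (t₂ - t₁) ^ α := by
    have h := intervalIntegral.norm_integral_le_abs_of_norm_le hABnd hgint
    rw [Real.norm_eq_abs] at h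
    refine h.trans ?_
    rw [abs_of_nonneg hg0, hgval]
    have : (t₁ - a) ^ α - (t₂ - a) ^ α + (t₂ - t₁) ^ α ≤ (t₂ - t₁) ^ α := by linarith
    exact mul_le_mul_of_nonneg_left this (by positivity)
  -- bound for B
  have hg2int : IntervalIntegrable (fun τ => M * (t₂ - τ) ^ (α-1)) volume t₁ t₂ :=
    (rl_ker_int hα0 t₂ t₁ t₂).const_mul M
  have hBBnd : ∀ᵐ τ ∂(volume.restrict (Set.uIoc t₁ t₂)),
      ‖(t₂ - τ)^(α-1) * q τ‖ ≤ M * (t₂ - τ) ^ (α-1) := by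
    rw [uIoc_of_le h12]
    filter_upwards [hMloc2, ae_restrict_mem measurableSet_Ioc] with τ hq hmem
    have hknn : 0 ≤ (t₂ - τ)^(α-1) := Real.rpow_nonneg (by linarith [hmem.2]) _
    rw [norm_mul, Real.norm_eq_abs, Real.norm_eq_abs, abs_of_nonneg hknn, mul_comm M _]
    exact mul_le_mul_of_nonneg_left hq hknn
  have hg2val : (∫ τ in t₁..t₂, M * (t₂ - τ) ^ (α-1)) = (M / α) * (t₂ - t₁) ^ α := by
    rw [intervalIntegral.integral_const_mul, rl_pow_integral hα0, sub_self,
      Real.zero_rpow hα0.ne']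
    ring
  have hBle : |∫ τ in t₁..t₂, (t₂ - τ)^(α-1) * q τ| ≤ (M / α) * (t₂ - t₁) ^ α := by
    have h := intervalIntegral.norm_integral_le_abs_of_norm_le hBBnd hg2int
    rw [Real.norm_eq_abs] at h
    refine h.trans ?_
    rw [hg2val, abs_of_nonneg (mul_nonneg (by positivity) (Real.rpow_nonneg (by linarith) _))]
  calc |(∫ τ in a..t₂, (t₂ - τ) ^ (α - 1) * q τ) - ∫ τ in a..t₁, (t₁ - τ) ^ (α - 1) * q τ|
      = |(∫ τ in a..t₁, ((t₂ - τ)^(α-1) - (t₁ - τ)^(α-1)) * q τ)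
          + ∫ τ in t₁..t₂, (t₂ - τ)^(α-1) * q τ| := by
        rw [hsplit, ← hA]; congr 1; ring
    _ ≤ |∫ τ in a..t₁, ((t₂ - τ)^(α-1) - (t₁ - τ)^(α-1)) * q τ|
          + |∫ τ in t₁..t₂, (t₂ - τ)^(α-1) * q τ| := abs_add_le _ _
    _ ≤ (M / α) * (t₂ - t₁) ^ α + (M / α) * (t₂ - t₁) ^ α := add_le_add hAle hBle
    _ = (2 * M / α) * (t₂ - t₁) ^ α := by ring

theorem statement2 (a : ℝ) (I : Set ℝ)
    (haI : a ∈ I) (hIsub : I ⊆ Set.Ici a) (hIint : (interior I).Nonempty)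
    (hIord : I.OrdConnected)
    (α : ℝ) (hα0 : 0 < α) (hα1 : α ≤ 1) (q : ℝ → ℝ)
    (hqm : MeasureTheory.AEStronglyMeasurable q (MeasureTheory.volume.restrict I))
    (hqb : ∃ M : ℝ, ∀ᵐ t ∂(MeasureTheory.volume.restrict I), |q t| ≤ M) :
    (∃ C : ℝ, 0 ≤ C ∧ ∀ t₁ ∈ I, ∀ t₂ ∈ I,
      |rlInt a α q t₂ - rlInt a α q t₁| ≤ C * |t₂ - t₁| ^ α) ∧
    rlInt a α q a = 0 := by
  obtain ⟨M₀, hM₀⟩ := hqb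
  set M := max M₀ 0 with hMdef
  have hM : ∀ᵐ τ ∂(volume.restrict I), |q τ| ≤ M :=
    hM₀.mono fun τ h => le_trans h (le_max_left _ _)
  have hMnn : 0 ≤ M := le_max_right _ _
  have hΓ : 0 < Real.Gamma α := Real.Gamma_pos_of_pos hα0
  have hαne : α ≠ 0 := hα0.ne'
  constructor
  · refine ⟨(1 / Real.Gamma α) * (2 * M / α), by positivity, ?_⟩
    have key : ∀ s₁ ∈ I, ∀ s₂ ∈ I, s₁ ≤ s₂ →
        |rlInt a α q s₂ - rlInt a α q s₁|
          ≤ (1 / Real.Gamma α) * (2 * M / α) * |s₂ - s₁| ^ α := by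
      intro s₁ hs₁ s₂ hs₂ h12
      have ha1 : a ≤ s₁ := hIsub hs₁
      have hsub2 : Ioc a s₂ ⊆ I := fun x hx => hIord.out haI hs₂ ⟨hx.1.le, hx.2⟩
      have hmain := rl_hoelder hα0 hα1 hqm hM hMnn ha1 h12 hsub2
      simp only [rlInt, if_neg hαne]
      rw [← mul_sub, abs_mul,
        abs_of_nonneg (by positivity : (0:ℝ) ≤ 1 / Real.Gamma α),
        abs_of_nonneg (by linarith : (0:ℝ) ≤ s₂ - s₁)]
      calc (1 / Real.Gamma α) *
            |(∫ τ in a..s₂, (s₂ - τ) ^ (α-1) * q τ) - ∫ τ in a..s₁, (s₁ - τ) ^ (α-1) * q τ|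
          ≤ (1 / Real.Gamma α) * ((2 * M / α) * (s₂ - s₁) ^ α) :=
            mul_le_mul_of_nonneg_left hmain (by positivity)
        _ = (1 / Real.Gamma α) * (2 * M / α) * (s₂ - s₁) ^ α := by ring
    intro t₁ ht₁ t₂ ht₂
    rcases le_total t₁ t₂ with h | h
    · exact key t₁ ht₁ t₂ ht₂ h
    · rw [abs_sub_comm, abs_sub_comm t₂ t₁]
      exact key t₂ ht₂ t₁ ht₁ h
  · simp [rlInt, hαne, intervalIntegral.integral_same]
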